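/- arXiv:1511.00635 — 2 statements merged into one kernel-verified Lean document; each statement's English description precedes it below -/
import Mathlib

section
/- Let S and T be positive trace-class operators on a Hilbert space ℍ with T invertible. If S ≤ T, then √S (log S) √S ≤ √S (log T) √S as self-adjoint operators (with the convention 0·log 0 = 0 on the kernel of S). -/
set_option synthInstance.maxHeartbeats 1000000
set_option maxHeartbeats 1000000

open scoped NNReal ENNReal

section AuxLemmas

lemma my_spectralRadius_mul_comm {𝕜 A : Type*} [NormedField 𝕜] [NormedRing A] [NormedAlgebra 𝕜 A]
    (a b : A) : spectralRadius 𝕜 (a * b) = spectralRadius 𝕜 (b * a) := by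
  have key : ∀ c d : A, spectralRadius 𝕜 (c * d) ≤ spectralRadius 𝕜 (d * c) := by
    intro c d
    rw [spectralRadius, spectralRadius]
    refine iSup₂_le fun k hk => ?_
    rcases eq_or_ne k 0 with rfl | hk0
    · simp
    · have hmem : k ∈ spectrum 𝕜 (d * c) := by
        have : k ∈ spectrum 𝕜 (d * c) \ {0} := by
          rw [← spectrum.nonzero_mul_comm]; exact ⟨hk, hk0⟩
        exact this.1
      exact le_iSup₂ (f := fun k (_ : k ∈ spectrum 𝕜 (d * c)) => (‖k‖₊ : ℝ≥0∞)) k hmem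
  exact le_antisymm (key a b) (key b a)

lemma my_isUnit_of_mul_self {M : Type*} [Monoid M] {x : M} (h : IsUnit (x * x)) : IsUnit x := by
  obtain ⟨u, hu⟩ := h
  have hc : Commute x ↑u := by rw [hu]; exact (Commute.refl x).mul_right (Commute.refl x)
  have hc' : Commute x ↑u⁻¹ := hc.units_inv_right
  refine ⟨⟨x, x * ↑u⁻¹, ?_, ?_⟩, rfl⟩
  · rw [← mul_assoc, ← hu]; exact u.mul_inv
  · rw [hc'.eq, mul_assoc, ← hu]; exact u.inv_mul

lemma my_finite_continuousOn {α β : Type*} [TopologicalSpace α] [TopologicalSpace β]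
    {s : Set α} (hs : s.Finite) (f : α → β) [T1Space α] : ContinuousOn f s := by
  intro x hx
  have hbot : nhdsWithin x (s \ {x}) = ⊥ := by
    rw [← notMem_closure_iff_nhdsWithin_eq_bot,
      ((hs.subset (Set.diff_subset)).isClosed).closure_eq]
    simp
  have hle : nhdsWithin x s ≤ pure x := by
    have hsub : s ⊆ {x} ∪ (s \ {x}) := by intro y hy; by_cases h : y = x <;> simp [h, hy]
    calc nhdsWithin x s ≤ nhdsWithin x ({x} ∪ (s \ {x})) := nhdsWithin_mono x hsub
      _ = nhdsWithin x {x} ⊔ nhdsWithin x (s \ {x}) := nhdsWithin_union x _ _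
      _ = pure x := by rw [hbot, nhdsWithin_singleton, sup_bot_eq]
  exact Filter.Tendsto.mono_left (tendsto_pure_nhds f x) hle

/-- In finite dimensions, continuous linear endomorphisms and linear endomorphisms agree
as algebras. -/
noncomputable def myAlgEquiv (H : Type*) [NormedAddCommGroup H] [InnerProductSpace ℂ H]
    [FiniteDimensional ℂ H] : (H →L[ℂ] H) ≃ₐ[ℂ] (Module.End ℂ H) where
  toFun f := f.toLinearMap
  invFun f := ⟨f, f.continuous_of_finiteDimensional⟩
  left_inv _ := rfl
  right_inv _ := rfl
  map_mul' _ _ := rfl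
  map_add' _ _ := rfl
  commutes' _ := rfl

lemma my_spectrum_finite {H : Type*} [NormedAddCommGroup H] [InnerProductSpace ℂ H]
    [FiniteDimensional ℂ H] (S : H →L[ℂ] H) : (spectrum ℝ S).Finite := by
  have hC : (spectrum ℂ S).Finite := by
    rw [← AlgEquiv.spectrum_eq (myAlgEquiv H) S]
    exact Module.End.finite_spectrum _
  have h : spectrum ℝ S = (algebraMap ℝ ℂ) ⁻¹' (spectrum ℂ S) :=
    (spectrum.preimage_algebraMap ℂ).symm
  rw [h]
  exact Set.Finite.preimage ((algebraMap ℝ ℂ).injective.injOn) hC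

lemma my_findim {H ι : Type*} [NormedAddCommGroup H] [InnerProductSpace ℂ H]
    [CompleteSpace H] (b : HilbertBasis ι ℂ H) (T : H →L[ℂ] H)
    (hTsum : Summable fun i => (inner ℂ (b i) (T (b i)) : ℂ).re)
    {c : ℝ} (hc : 0 < c) (hcT : algebraMap ℝ (H →L[ℂ] H) c ≤ T) :
    FiniteDimensional ℂ H := by
  have hdiag : ∀ i, c ≤ (inner ℂ (b i) (T (b i)) : ℂ).re := by
    intro i
    set v : H := b i with hv
    have hpos : (T - algebraMap ℝ (H →L[ℂ] H) c).IsPositive :=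
      (ContinuousLinearMap.nonneg_iff_isPositive _).mp (sub_nonneg.mpr hcT)
    have h0 := hpos.inner_nonneg_right v
    have halg : (algebraMap ℝ (H →L[ℂ] H) c) v = (c : ℂ) • v := by
      rw [Algebra.algebraMap_eq_smul_one]
      simp [ContinuousLinearMap.smul_apply]
    have hni : ‖v‖ = 1 := b.orthonormal.1 i
    rw [ContinuousLinearMap.sub_apply, inner_sub_right, halg, inner_smul_right] at h0
    replace h0 := (Complex.le_def.mp h0).1
    simp only [Complex.zero_re, Complex.sub_re] at h0
    have hre : ((c : ℂ) * (inner ℂ v v : ℂ)).re = c := by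
      rw [inner_self_eq_norm_sq_to_K (𝕜 := ℂ)]
      simp [hni]
    rw [hre] at h0
    linarith
  have hfin : Finite ι := by
    by_contra hinf
    rw [not_finite_iff_infinite] at hinf
    have ht := hTsum.tendsto_cofinite_zero
    obtain ⟨i, hi⟩ := (ht.eventually_lt_const hc).exists
    exact absurd (hdiag i) (not_le.mpr hi)
  have hfd : FiniteDimensional ℂ (Submodule.span ℂ (Set.range b)) :=
    FiniteDimensional.span_of_finite ℂ (Set.finite_range b)
  have hclosed : IsClosed (↑(Submodule.span ℂ (Set.range b)) : Set H) :=
    Submodule.closed_of_finiteDimensional _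
  have htop : Submodule.span ℂ (Set.range ⇑b) = ⊤ := by
    rw [← hclosed.submodule_topologicalClosure_eq]
    exact b.dense_span
  rw [htop] at hfd
  exact FiniteDimensional.of_injective (Submodule.topEquiv.symm.toLinearMap)
    (Submodule.topEquiv.symm.injective)

end AuxLemmas

section LoewnerHeinz

variable {A : Type*} [CStarAlgebra A] [PartialOrder A] [StarOrderedRing A]

lemma my_sqrt_le_sqrt {a b : A} (ha : 0 ≤ a) (hbu : IsUnit b) (hab : a ≤ b) :
    CFC.sqrt a ≤ CFC.sqrt b := by
  rcases subsingleton_or_nontrivial A with hA | hA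
  · exact le_of_eq (Subsingleton.elim _ _)
  have hb : 0 ≤ b := ha.trans hab
  have hsbu : IsUnit (CFC.sqrt b) :=
    my_isUnit_of_mul_self (by rwa [CFC.sqrt_mul_sqrt_self b hb])
  set sb : Aˣ := hsbu.unit with hsb_def
  have hsb_coe : (sb : A) = CFC.sqrt b := rfl
  have hsb_nn : 0 ≤ (sb : A) := hsb_coe ▸ (CFC.sqrt_nonneg _)
  have hsbinv_nn : 0 ≤ ((sb⁻¹ : Aˣ) : A) := CFC.inv_nonneg_of_nonneg sb hsb_nn
  set bu : Aˣ := hbu.unit with hbu_def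
  have hbu_coe : (bu : A) = b := rfl
  have hsq_inv : ((sb⁻¹ : Aˣ) : A) * ((sb⁻¹ : Aˣ) : A) = ((bu⁻¹ : Aˣ) : A) := by
    have hsbsb : sb * sb = bu := by
      ext
      simp only [Units.val_mul, hsb_coe, hbu_coe]
      exact CFC.sqrt_mul_sqrt_self b hb
    rw [← Units.val_mul, ← mul_inv_rev, hsbsb]
  have hsqrt_binv : CFC.sqrt ((bu⁻¹ : Aˣ) : A) = ((sb⁻¹ : Aˣ) : A) :=
    CFC.sqrt_unique hsq_inv hsbinv_nn
  have key : ‖CFC.sqrt a * ((sb⁻¹ : Aˣ) : A)‖ ≤ 1 := by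
    have h := (le_iff_norm_sqrt_mul_sqrt_inv (b := bu) ha hb).mp hab
    rwa [hsqrt_binv] at h
  rw [show CFC.sqrt b = (sb : A) from rfl]
  rw [le_iff_norm_sqrt_mul_sqrt_inv (b := sb) (CFC.sqrt_nonneg _) hsb_nn]
  set p : A := CFC.sqrt (CFC.sqrt a) with hp_def
  set q : A := CFC.sqrt ((sb⁻¹ : Aˣ) : A) with hq_def
  have hp : (0 : A) ≤ p := (CFC.sqrt_nonneg _)
  have hq : (0 : A) ≤ q := (CFC.sqrt_nonneg _)
  have hp2 : p * p = CFC.sqrt a := CFC.sqrt_mul_sqrt_self _ (CFC.sqrt_nonneg _)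
  have hq2 : q * q = ((sb⁻¹ : Aˣ) : A) := CFC.sqrt_mul_sqrt_self _ hsbinv_nn
  rw [← hp2, ← hq2] at key
  have hps : star p = p := (IsSelfAdjoint.of_nonneg hp).star_eq
  have hqs : star q = q := (IsSelfAdjoint.of_nonneg hq).star_eq
  rw [← sq_le_one_iff₀ (norm_nonneg _), sq, ← CStarRing.norm_self_mul_star]
  have hstar : (p * q) * star (p * q) = p * (q * q * p) := by
    rw [star_mul, hps, hqs]; simp [mul_assoc]
  rw [hstar]
  have hw_nn : (0 : A) ≤ p * (q * q * p) := by
    rw [← hstar]; exact mul_star_self_nonneg _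
  have hw_sa : IsSelfAdjoint (p * (q * q * p)) := .of_nonneg hw_nn
  have h1 : ‖p * (q * q * p)‖ = (spectralRadius ℝ (p * (q * q * p))).toReal :=
    hw_sa.toReal_spectralRadius_eq_norm.symm
  have h2 : spectralRadius ℝ (p * (q * q * p)) = spectralRadius ℝ (q * q * (p * p)) := by
    rw [my_spectralRadius_mul_comm, mul_assoc]
  have h3 : (spectralRadius ℝ (q * q * (p * p))).toReal ≤ ‖q * q * (p * p)‖ := by
    have h := spectrum.spectralRadius_le_nnnorm (𝕜 := ℝ) (q * q * (p * p))
    calc (spectralRadius ℝ (q * q * (p * p))).toReal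
        ≤ ((‖q * q * (p * p)‖₊ : ℝ≥0∞)).toReal := ENNReal.toReal_mono (by simp) h
      _ = ‖q * q * (p * p)‖ := by simp
  have h4 : ‖q * q * (p * p)‖ = ‖p * p * (q * q)‖ := by
    rw [← norm_star (q * q * (p * p))]
    congr 1
    simp only [star_mul, hps, hqs, mul_assoc]
  rw [h1, h2]
  exact h3.trans (h4.le.trans key)

lemma my_iter_nonneg' (k : ℕ) {a : A} (ha : 0 ≤ a) : 0 ≤ CFC.sqrt^[k] a := by
  cases k with
  | zero => exact ha
  | succ n => rw [Function.iterate_succ_apply']; exact (CFC.sqrt_nonneg _)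

lemma my_iter_isUnit (k : ℕ) {a : A} (ha : 0 ≤ a) (hu : IsUnit a) :
    IsUnit (CFC.sqrt^[k] a) := by
  induction k with
  | zero => exact hu
  | succ n ih =>
    rw [Function.iterate_succ_apply']
    exact my_isUnit_of_mul_self
      (by rwa [CFC.sqrt_mul_sqrt_self _ (my_iter_nonneg' n ha)])

lemma my_iter_le_iter (k : ℕ) {a b : A} (ha : 0 ≤ a) (hbu : IsUnit b) (hab : a ≤ b) :
    CFC.sqrt^[k] a ≤ CFC.sqrt^[k] b := by
  have hb : 0 ≤ b := ha.trans hab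
  induction k with
  | zero => exact hab
  | succ n ih =>
    rw [Function.iterate_succ_apply', Function.iterate_succ_apply']
    exact my_sqrt_le_sqrt (my_iter_nonneg' n ha) (my_iter_isUnit n hb hbu) ih

lemma my_spectrum_pos {a : A} (ha : 0 ≤ a) (hu : IsUnit a) :
    ∀ x ∈ spectrum ℝ a, 0 < x := by
  intro x hx
  have h0 : x ≠ 0 := by
    rintro rfl
    exact (spectrum.zero_notMem_iff ℝ).mpr hu hx
  exact lt_of_le_of_ne (spectrum_nonneg_of_nonneg ha hx) (Ne.symm h0)

lemma my_contOn_exp_log {a : A} (ha : 0 ≤ a) (hu : IsUnit a) (c : ℝ) :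
    ContinuousOn (fun x : ℝ => Real.exp (c * Real.log x)) (spectrum ℝ a) := by
  have hsub : spectrum ℝ a ⊆ {(0 : ℝ)}ᶜ := fun x hx => (my_spectrum_pos ha hu x hx).ne'
  exact Real.continuous_exp.comp_continuousOn
    (continuousOn_const.mul (Real.continuousOn_log.mono hsub))

lemma my_iter_eq_cfc (k : ℕ) {a : A} (ha : 0 ≤ a) (hu : IsUnit a) :
    CFC.sqrt^[k] a = cfc (fun x : ℝ => Real.exp ((2 : ℝ)⁻¹ ^ k * Real.log x)) a := by
  have hsa : IsSelfAdjoint a := IsSelfAdjoint.of_nonneg ha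
  induction k with
  | zero =>
    simp only [Function.iterate_zero_apply, pow_zero, one_mul]
    rw [cfc_congr (fun x hx => Real.exp_log (my_spectrum_pos ha hu x hx)), cfc_id' ℝ a]
  | succ n ih =>
    rw [Function.iterate_succ_apply', ih]
    have hsq : (cfc (fun x : ℝ => Real.exp ((2 : ℝ)⁻¹ ^ (n+1) * Real.log x)) a)
        * (cfc (fun x : ℝ => Real.exp ((2 : ℝ)⁻¹ ^ (n+1) * Real.log x)) a)
        = cfc (fun x : ℝ => Real.exp ((2 : ℝ)⁻¹ ^ n * Real.log x)) a := by
      rw [← cfc_mul _ _ a (my_contOn_exp_log ha hu _) (my_contOn_exp_log ha hu _)]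
      refine cfc_congr fun x _ => ?_
      rw [← Real.exp_add]
      congr 1
      rw [pow_succ]
      ring
    rw [CFC.sqrt_unique hsq (cfc_nonneg fun x _ => (Real.exp_pos _).le)]

lemma my_tendsto_iter {a : A} (ha : 0 ≤ a) (hu : IsUnit a) :
    Filter.Tendsto (fun k : ℕ => (2 : ℝ) ^ k • CFC.sqrt^[k] a - (2 : ℝ) ^ k • (1 : A))
      Filter.atTop (nhds (CFC.log a)) := by
  have hsa : IsSelfAdjoint a := IsSelfAdjoint.of_nonneg ha
  have hlogcont : ContinuousOn Real.log (spectrum ℝ a) :=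
    Real.continuousOn_log.mono fun x hx => (my_spectrum_pos ha hu x hx).ne'
  obtain ⟨L, hL0, hLb⟩ : ∃ L : ℝ, 0 ≤ L ∧ ∀ x ∈ spectrum ℝ a, |Real.log x| ≤ L := by
    have hcpt : IsCompact (Real.log '' spectrum ℝ a) :=
      (spectrum.isCompact a).image_of_continuousOn hlogcont
    obtain ⟨C, hC⟩ := Bornology.IsBounded.exists_norm_le hcpt.isBounded
    exact ⟨max C 0, le_max_right _ _,
      fun x hx => ((hC _ ⟨x, hx, rfl⟩).trans (le_max_left _ _))⟩
  have hXk : ∀ k : ℕ, (2 : ℝ) ^ k • CFC.sqrt^[k] a - (2 : ℝ) ^ k • (1 : A)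
      = cfc (fun x : ℝ => (2 : ℝ) ^ k * (Real.exp ((2 : ℝ)⁻¹ ^ k * Real.log x) - 1)) a := by
    intro k
    rw [my_iter_eq_cfc k ha hu]
    have h1 : (1 : A) = cfc (fun _ : ℝ => (1 : ℝ)) a := by rw [cfc_const 1 a]; simp
    calc (2 : ℝ) ^ k • cfc (fun x : ℝ => Real.exp ((2 : ℝ)⁻¹ ^ k * Real.log x)) a
          - (2 : ℝ) ^ k • (1 : A)
        = (2 : ℝ) ^ k • (cfc (fun x : ℝ => Real.exp ((2 : ℝ)⁻¹ ^ k * Real.log x)) a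
          - cfc (fun _ : ℝ => (1 : ℝ)) a) := by rw [← h1, smul_sub]
      _ = (2 : ℝ) ^ k • cfc (fun x : ℝ => Real.exp ((2 : ℝ)⁻¹ ^ k * Real.log x) - 1) a := by
          rw [cfc_sub _ _ a (my_contOn_exp_log ha hu _) continuousOn_const]
      _ = cfc (fun x : ℝ => (2 : ℝ) ^ k * (Real.exp ((2 : ℝ)⁻¹ ^ k * Real.log x) - 1)) a := by
          rw [← cfc_smul ((2:ℝ)^k) _ a]
          simp [smul_eq_mul]
  have hgcont : ∀ k : ℕ,
      ContinuousOn (fun x : ℝ => (2 : ℝ) ^ k * (Real.exp ((2 : ℝ)⁻¹ ^ k * Real.log x) - 1))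
        (spectrum ℝ a) := fun k =>
    continuousOn_const.mul ((my_contOn_exp_log ha hu _).sub continuousOn_const)
  rw [← tendsto_sub_nhds_zero_iff]
  have htend : Filter.Tendsto (fun k : ℕ => (2 : ℝ)⁻¹ ^ k * L) Filter.atTop (nhds 0) := by
    simpa using (tendsto_pow_atTop_nhds_zero_of_lt_one (r := (2:ℝ)⁻¹) (by norm_num)
      (by norm_num)).mul_const L
  have htend2 : Filter.Tendsto (fun k : ℕ => (2 : ℝ)⁻¹ ^ k * L ^ 2) Filter.atTop (nhds 0) := by
    simpa using (tendsto_pow_atTop_nhds_zero_of_lt_one (r := (2:ℝ)⁻¹) (by norm_num)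
      (by norm_num)).mul_const (L ^ 2)
  refine squeeze_zero_norm' ?_ htend2
  filter_upwards [htend.eventually_le_const (show (0:ℝ) < 1 by norm_num)] with k hk
  rw [hXk k]
  have hdiff : cfc (fun x : ℝ => (2 : ℝ) ^ k * (Real.exp ((2 : ℝ)⁻¹ ^ k * Real.log x) - 1)) a
      - CFC.log a
      = cfc (fun x : ℝ => (2 : ℝ) ^ k * (Real.exp ((2 : ℝ)⁻¹ ^ k * Real.log x) - 1)
          - Real.log x) a := by
    rw [CFC.log, ← cfc_sub _ _ a (hgcont k) hlogcont]
  rw [hdiff]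
  refine norm_cfc_le (mul_nonneg (by positivity) (sq_nonneg L)) fun x hx => ?_
  set t := Real.log x with ht
  have hLt : |t| ≤ L := hLb x hx
  set c : ℝ := (2 : ℝ)⁻¹ ^ k with hc_def
  have hc0 : 0 ≤ c := by positivity
  have hc1 : (2 : ℝ) ^ k * c = 1 := by rw [hc_def, ← mul_pow]; norm_num
  set s : ℝ := c * t with hs_def
  have hs1 : |s| ≤ 1 := by
    rw [hs_def, abs_mul, abs_of_nonneg hc0]
    calc c * |t| ≤ c * L := by exact mul_le_mul_of_nonneg_left hLt hc0
      _ ≤ 1 := hk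
  have hrw : (2 : ℝ) ^ k * (Real.exp s - 1) - t = (2 : ℝ) ^ k * (Real.exp s - 1 - s) := by
    have h2 : (2 : ℝ) ^ k * s = t := by rw [hs_def, ← mul_assoc, hc1, one_mul]
    rw [← h2]; ring
  rw [Real.norm_eq_abs, hrw, abs_mul, abs_of_nonneg (by positivity : (0:ℝ) ≤ (2:ℝ)^k)]
  calc (2 : ℝ) ^ k * |Real.exp s - 1 - s| ≤ (2 : ℝ) ^ k * s ^ 2 :=
        mul_le_mul_of_nonneg_left (Real.abs_exp_sub_one_sub_id_le hs1) (by positivity)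
    _ = c * t ^ 2 := by
        rw [hs_def]
        calc (2 : ℝ) ^ k * (c * t) ^ 2 = ((2 : ℝ) ^ k * c) * (c * t ^ 2) := by ring
          _ = c * t ^ 2 := by rw [hc1, one_mul]
    _ ≤ c * L ^ 2 := by
        refine mul_le_mul_of_nonneg_left ?_ hc0
        calc t ^ 2 = |t| ^ 2 := (sq_abs t).symm
          _ ≤ L ^ 2 := by exact pow_le_pow_left₀ (abs_nonneg t) hLt 2

lemma my_log_le_log {a b : A} (ha : 0 ≤ a) (hau : IsUnit a) (hbu : IsUnit b) (hab : a ≤ b) :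
    CFC.log a ≤ CFC.log b := by
  have hb : 0 ≤ b := ha.trans hab
  have hk : ∀ k : ℕ, (0 : A) ≤ ((2 : ℝ) ^ k • CFC.sqrt^[k] b - (2 : ℝ) ^ k • (1 : A))
      - ((2 : ℝ) ^ k • CFC.sqrt^[k] a - (2 : ℝ) ^ k • (1 : A)) := by
    intro k
    have hle := my_iter_le_iter k ha hbu hab
    have hdnn : (0 : A) ≤ CFC.sqrt^[k] b - CFC.sqrt^[k] a := sub_nonneg.mpr hle
    have hsmul : (0 : A) ≤ (2 : ℝ) ^ k • (CFC.sqrt^[k] b - CFC.sqrt^[k] a) := by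
      have hsa : IsSelfAdjoint (CFC.sqrt^[k] b - CFC.sqrt^[k] a) := .of_nonneg hdnn
      rw [← cfc_smul_id (R := ℝ) ((2:ℝ)^k) _ hsa]
      exact cfc_nonneg fun x hx =>
        mul_nonneg (by positivity) (spectrum_nonneg_of_nonneg hdnn hx)
    calc (0 : A) ≤ (2 : ℝ) ^ k • (CFC.sqrt^[k] b - CFC.sqrt^[k] a) := hsmul
      _ = ((2 : ℝ) ^ k • CFC.sqrt^[k] b - (2 : ℝ) ^ k • (1 : A))
          - ((2 : ℝ) ^ k • CFC.sqrt^[k] a - (2 : ℝ) ^ k • (1 : A)) := by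
        rw [smul_sub]; abel
  have htt := (my_tendsto_iter hb hbu).sub (my_tendsto_iter ha hau)
  have hmem : CFC.log b - CFC.log a ∈ {x : A | 0 ≤ x} :=
    (CStarAlgebra.isClosed_nonneg (A := A)).mem_of_tendsto htt
      (Filter.Eventually.of_forall hk)
  exact sub_nonneg.mp hmem

end LoewnerHeinz

/-- The trace of an operator computed along a Hilbert basis. -/
noncomputable def traceAlong {H ι : Type*} [NormedAddCommGroup H] [InnerProductSpace ℂ H]
    [CompleteSpace H] (b : HilbertBasis ι ℂ H) (T : H →L[ℂ] H) : ℝ :=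
  ∑' i, (inner ℂ (b i) (T (b i)) : ℂ).re

/-- Let `S` and `T` be positive trace-class operators (semi-density matrices) on a Hilbert
space with `T` invertible.  If `S ≤ T` in the Loewner order, then
`√S (log S) √S ≤ √S (log T) √S` (with `log` given by the continuous functional calculus,
realizing the convention `0 · log 0 = 0` on the kernel of `S`). -/
theorem sqrt_log_sqrt_le_of_le {H ι : Type*} [NormedAddCommGroup H]
    [InnerProductSpace ℂ H] [CompleteSpace H] [Countable ι] (b : HilbertBasis ι ℂ H)
    (S T : H →L[ℂ] H)
    (hS : 0 ≤ S) (hT : 0 ≤ T)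
    (hSsum : Summable fun i => (inner ℂ (b i) (S (b i)) : ℂ).re)
    (hTsum : Summable fun i => (inner ℂ (b i) (T (b i)) : ℂ).re)
    (hStr : traceAlong b S ≤ 1) (hTtr : traceAlong b T ≤ 1)
    (hTinv : IsUnit T) (hST : S ≤ T) :
    CFC.sqrt S * CFC.log S * CFC.sqrt S ≤ CFC.sqrt S * CFC.log T * CFC.sqrt S := by
  rcases subsingleton_or_nontrivial (H →L[ℂ] H) with hA | hA
  · exact le_of_eq (Subsingleton.elim _ _)
  have hTsa : IsSelfAdjoint T := IsSelfAdjoint.of_nonneg hT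
  have hSsa : IsSelfAdjoint S := IsSelfAdjoint.of_nonneg hS
  have hTpos : ∀ x ∈ spectrum ℝ T, 0 < x := my_spectrum_pos hT hTinv
  obtain ⟨c, hc, hcT⟩ : ∃ r > (0:ℝ), algebraMap ℝ (H →L[ℂ] H) r ≤ T :=
    (CFC.exists_pos_algebraMap_le_iff hTsa).mpr hTpos
  haveI : FiniteDimensional ℂ H := my_findim b T hTsum hc hcT
  have hSfin : (spectrum ℝ S).Finite := my_spectrum_finite S
  have hlogScont : ContinuousOn Real.log (spectrum ℝ S) := my_finite_continuousOn hSfin _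
  have hlogTcont : ContinuousOn Real.log (spectrum ℝ T) :=
    Real.continuousOn_log.mono fun x hx => (hTpos x hx).ne'
  have hSnn : ∀ x ∈ spectrum ℝ S, (0:ℝ) ≤ x := fun x hx => spectrum_nonneg_of_nonneg hS hx
  -- identify CFC.sqrt with the real cfc of Real.sqrt
  have hsqrtS : CFC.sqrt S = cfc Real.sqrt S := by
    have hmul : (cfc Real.sqrt S) * (cfc Real.sqrt S) = S := by
      rw [← cfc_mul _ _ S Real.continuous_sqrt.continuousOn Real.continuous_sqrt.continuousOn,
        cfc_congr (fun x hx => Real.mul_self_sqrt (hSnn x hx)), cfc_id' ℝ S]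
    exact CFC.sqrt_unique hmul (cfc_nonneg fun x _ => Real.sqrt_nonneg x)
  -- for each ε > 0
  have hstep : ∀ ε : ℝ, 0 < ε →
      CFC.sqrt S * CFC.log S * CFC.sqrt S
        ≤ CFC.sqrt S * CFC.log (T + algebraMap ℝ (H →L[ℂ] H) ε) * CFC.sqrt S := by
    intro ε hε
    have halg_nn : (0 : H →L[ℂ] H) ≤ algebraMap ℝ (H →L[ℂ] H) ε :=
      cfc_const ε (1 : H →L[ℂ] H) ▸ cfc_nonneg (fun x _ => hε.le)
    have halgu : IsUnit (algebraMap ℝ (H →L[ℂ] H) ε) := (isUnit_iff_ne_zero.mpr hε.ne').map (algebraMap ℝ (H →L[ℂ] H))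
    have hSε_nn : (0 : H →L[ℂ] H) ≤ S + algebraMap ℝ (H →L[ℂ] H) ε := add_nonneg hS halg_nn
    have hTε_nn : (0 : H →L[ℂ] H) ≤ T + algebraMap ℝ (H →L[ℂ] H) ε := add_nonneg hT halg_nn
    have hSεu : IsUnit (S + algebraMap ℝ (H →L[ℂ] H) ε) :=
      CStarAlgebra.isUnit_of_le _ (le_add_of_nonneg_left hS) ⟨halg_nn, halgu⟩
    have hTεu : IsUnit (T + algebraMap ℝ (H →L[ℂ] H) ε) :=
      CStarAlgebra.isUnit_of_le _ (add_le_add_left hST _) ⟨hSε_nn, hSεu⟩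
    have hlogle : CFC.log (S + algebraMap ℝ (H →L[ℂ] H) ε) ≤ CFC.log (T + algebraMap ℝ (H →L[ℂ] H) ε) :=
      my_log_le_log hSε_nn hSεu hTεu (add_le_add_left hST _)
    have hconj : CFC.sqrt S * CFC.log (S + algebraMap ℝ (H →L[ℂ] H) ε) * CFC.sqrt S
        ≤ CFC.sqrt S * CFC.log (T + algebraMap ℝ (H →L[ℂ] H) ε) * CFC.sqrt S :=
      IsSelfAdjoint.conjugate_le_conjugate hlogle (IsSelfAdjoint.of_nonneg (CFC.sqrt_nonneg _))
    refine le_trans ?_ hconj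
    -- first leg: √S log S √S ≤ √S log (S + ε) √S, via cfc of S
    have hadd_cont : ContinuousOn (fun x : ℝ => x + ε) (spectrum ℝ S) :=
      (continuous_id.add continuous_const).continuousOn
    have hlogeps_cont : ContinuousOn (fun x : ℝ => Real.log (x + ε)) (spectrum ℝ S) := by
      refine Real.continuousOn_log.comp hadd_cont ?_
      intro x hx
      simp only [Set.mem_compl_iff, Set.mem_singleton_iff]
      have h1 := hSnn x hx
      intro h; nlinarith
    have hSε_cfc : S + algebraMap ℝ (H →L[ℂ] H) ε = cfc (fun x : ℝ => x + ε) S := by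
      have h1 : S + algebraMap ℝ (H →L[ℂ] H) ε
          = cfc (fun x : ℝ => x) S + cfc (fun _ : ℝ => ε) S := by
        rw [cfc_id' ℝ S, cfc_const ε S]
      rw [h1]
      exact (cfc_add (R := ℝ) (a := S) _ _ continuousOn_id continuousOn_const).symm
    have hlogSε : CFC.log (S + algebraMap ℝ (H →L[ℂ] H) ε) = cfc (fun x : ℝ => Real.log (x + ε)) S := by
      rw [CFC.log, hSε_cfc, ← cfc_comp Real.log (fun x : ℝ => x + ε) S hSsa ?hg hadd_cont]
      · rfl
      case hg =>
        refine Real.continuousOn_log.mono ?_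
        rintro y ⟨x, hx, rfl⟩
        simp only [Set.mem_compl_iff, Set.mem_singleton_iff]
        have := hSnn x hx
        intro h; nlinarith
    have htriple1 : CFC.sqrt S * CFC.log S * CFC.sqrt S
        = cfc (fun x : ℝ => Real.sqrt x * Real.log x * Real.sqrt x) S := by
      rw [hsqrtS, CFC.log,
        ← cfc_mul _ _ S Real.continuous_sqrt.continuousOn hlogScont,
        ← cfc_mul (fun x : ℝ => Real.sqrt x * Real.log x) Real.sqrt S (Real.continuous_sqrt.continuousOn.mul hlogScont)
          Real.continuous_sqrt.continuousOn]
    have htriple2 : CFC.sqrt S * CFC.log (S + algebraMap ℝ (H →L[ℂ] H) ε) * CFC.sqrt S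
        = cfc (fun x : ℝ => Real.sqrt x * Real.log (x + ε) * Real.sqrt x) S := by
      rw [hsqrtS, hlogSε,
        ← cfc_mul _ _ S Real.continuous_sqrt.continuousOn hlogeps_cont,
        ← cfc_mul (fun x : ℝ => Real.sqrt x * Real.log (x + ε)) Real.sqrt S (Real.continuous_sqrt.continuousOn.mul hlogeps_cont)
          Real.continuous_sqrt.continuousOn]
    rw [htriple1, htriple2]
    refine cfc_mono (fun x hx => ?_)
      ((Real.continuous_sqrt.continuousOn.mul hlogScont).mul
        Real.continuous_sqrt.continuousOn)
      ((Real.continuous_sqrt.continuousOn.mul hlogeps_cont).mul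
        Real.continuous_sqrt.continuousOn)
    have hx0 : (0:ℝ) ≤ x := hSnn x hx
    rcases eq_or_lt_of_le hx0 with rfl | hxpos
    · simp
    · have hlog : Real.log x ≤ Real.log (x + ε) :=
        Real.log_le_log hxpos (by linarith)
      exact mul_le_mul_of_nonneg_right
        (mul_le_mul_of_nonneg_left hlog (Real.sqrt_nonneg x)) (Real.sqrt_nonneg x)
  -- take the limit ε → 0 along εₙ = 1/(n+1)
  have hcx : ∀ x ∈ spectrum ℝ T, c ≤ x := by
    intro x hx
    exact (algebraMap_le_iff_le_spectrum (R := ℝ) (a := T) hTsa).mp hcT x hx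
  have hTconv : Filter.Tendsto (fun n : ℕ => CFC.log (T + algebraMap ℝ (H →L[ℂ] H) ((n+1:ℝ)⁻¹)))
      Filter.atTop (nhds (CFC.log T)) := by
    rw [← tendsto_sub_nhds_zero_iff]
    have hbnd : ∀ n : ℕ, ‖CFC.log (T + algebraMap ℝ (H →L[ℂ] H) ((n+1:ℝ)⁻¹)) - CFC.log T‖
        ≤ (n+1:ℝ)⁻¹ / c := by
      intro n
      set ε : ℝ := (n+1:ℝ)⁻¹ with hε_def
      have hε : (0:ℝ) < ε := by positivity
      have hadd_cont : ContinuousOn (fun x : ℝ => x + ε) (spectrum ℝ T) :=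
        (continuous_id.add continuous_const).continuousOn
      have hlogeps_cont : ContinuousOn (fun x : ℝ => Real.log (x + ε)) (spectrum ℝ T) := by
        refine Real.continuousOn_log.comp hadd_cont ?_
        intro x hx
        simp only [Set.mem_compl_iff, Set.mem_singleton_iff]
        have h1 := hTpos x hx
        intro h; nlinarith
      have hTε_cfc : T + algebraMap ℝ (H →L[ℂ] H) ε = cfc (fun x : ℝ => x + ε) T := by
        have h1 : T + algebraMap ℝ (H →L[ℂ] H) ε
            = cfc (fun x : ℝ => x) T + cfc (fun _ : ℝ => ε) T := by
          rw [cfc_id' ℝ T, cfc_const ε T]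
        rw [h1]
        exact (cfc_add (R := ℝ) (a := T) _ _ continuousOn_id continuousOn_const).symm
      have hlogTε : CFC.log (T + algebraMap ℝ (H →L[ℂ] H) ε) = cfc (fun x : ℝ => Real.log (x + ε)) T := by
        rw [CFC.log, hTε_cfc, ← cfc_comp Real.log (fun x : ℝ => x + ε) T hTsa ?hg2 hadd_cont]
        · rfl
        case hg2 =>
          refine Real.continuousOn_log.mono ?_
          rintro y ⟨x, hx, rfl⟩
          simp only [Set.mem_compl_iff, Set.mem_singleton_iff]
          have h1 := hTpos x hx
          intro h; nlinarith
      rw [hlogTε, CFC.log, ← cfc_sub _ _ T hlogeps_cont hlogTcont]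
      refine norm_cfc_le (by positivity) fun x hx => ?_
      have hxc : c ≤ x := hcx x hx
      have hxpos : (0:ℝ) < x := hTpos x hx
      have hmono : Real.log x ≤ Real.log (x + ε) := Real.log_le_log hxpos (by linarith)
      rw [Real.norm_eq_abs, abs_of_nonneg (sub_nonneg.mpr hmono)]
      have hdivlog : Real.log (x + ε) - Real.log x = Real.log ((x + ε) / x) := by
        rw [Real.log_div (by positivity) hxpos.ne']
      rw [hdivlog]
      have h1 : Real.log ((x + ε) / x) ≤ (x + ε) / x - 1 :=
        Real.log_le_sub_one_of_pos (by positivity)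
      have h2 : (x + ε) / x - 1 = ε / x := by field_simp; ring
      have h3 : ε / x ≤ ε / c := div_le_div_of_nonneg_left hε.le hc hxc
      calc Real.log ((x + ε) / x) ≤ (x + ε) / x - 1 := h1
        _ = ε / x := h2
        _ ≤ ε / c := h3
        _ = (n+1:ℝ)⁻¹ / c := rfl
    refine squeeze_zero_norm hbnd ?_
    have : Filter.Tendsto (fun n : ℕ => (n+1:ℝ)⁻¹) Filter.atTop (nhds 0) := by
      simpa [one_div] using tendsto_one_div_add_atTop_nhds_zero_nat (𝕜 := ℝ)
    simpa using this.div_const c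
  have hGconv : Filter.Tendsto
      (fun n : ℕ => CFC.sqrt S * CFC.log (T + algebraMap ℝ (H →L[ℂ] H) ((n+1:ℝ)⁻¹)) * CFC.sqrt S)
      Filter.atTop (nhds (CFC.sqrt S * CFC.log T * CFC.sqrt S)) :=
    (hTconv.const_mul _).mul_const _
  have hmem : CFC.sqrt S * CFC.log T * CFC.sqrt S - CFC.sqrt S * CFC.log S * CFC.sqrt S
      ∈ {x : H →L[ℂ] H | 0 ≤ x} := by
    refine (CStarAlgebra.isClosed_nonneg (A := H →L[ℂ] H)).mem_of_tendsto
      (hGconv.sub tendsto_const_nhds) (Filter.Eventually.of_forall fun n => ?_)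
    exact sub_nonneg.mpr (hstep _ (by positivity))
  exact sub_nonneg.mp hmem
end

section
/- Since x ↦ -log x is convex on (0,∞), for any density matrix ρ and any positive operator μ̂ with 0 < μ̂ ≤ 1 one has -log Tr(ρ μ̂) ≤ -Tr(ρ log μ̂); i.e., the lower Gacs complexity is bounded above by the upper Gacs complexity. -/
open scoped ComplexOrder
open scoped Matrix

private lemma trace_mul_diagonal' {d : ℕ} (M : Matrix (Fin d) (Fin d) ℂ) (v : Fin d → ℂ) :
    (M * Matrix.diagonal v).trace = ∑ i, M i i * v i := by
  simp [Matrix.trace, Matrix.diag, Matrix.mul_apply, Matrix.diagonal]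

/-- For a density matrix `ρ` and a positive (injective) operator `μ̂` with `0 < μ̂ ≤ 1` and
`Tr μ̂ ≤ 1`, one has `-log Tr(ρ μ̂) ≤ -Tr(ρ log μ̂)`: the lower Gacs complexity is bounded
above by the upper Gacs complexity (logarithms in base 2). -/
theorem lowerGacs_le_upperGacs {d : ℕ} (ρ μ : Matrix (Fin d) (Fin d) ℂ)
    (hρ : ρ.PosSemidef) (hρtr : ρ.trace = 1)
    (hμ : μ.PosDef) (hμ1 : (1 - μ).PosSemidef) (hμtr : (μ.trace).re ≤ 1) :
    -Real.logb 2 (((ρ * μ).trace).re) ≤ -(((ρ * cfc (Real.logb 2) μ).trace).re) := by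
  classical
  have hH : μ.IsHermitian := hμ.1
  set U : Matrix (Fin d) (Fin d) ℂ := (hH.eigenvectorUnitary : Matrix (Fin d) (Fin d) ℂ) with hU
  set lam : Fin d → ℝ := hH.eigenvalues with hlam
  set σ : Matrix (Fin d) (Fin d) ℂ := Uᴴ * ρ * U with hσdef
  have hσ : σ.PosSemidef := hρ.conjTranspose_mul_mul_same U
  -- diagonal entries of σ
  set q : Fin d → ℝ := fun i => (σ i i).re with hq
  have hdiag : ∀ i, 0 ≤ σ i i := by
    intro i
    exact hσ.diag_nonneg
  have hσre : ∀ i, (σ i i : ℂ) = (q i : ℂ) := by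
    intro i
    have := hdiag i
    rw [Complex.le_def] at this
    simp only [Complex.zero_re, Complex.zero_im] at this
    apply Complex.ext <;> simp [hq, this.2.symm]
  have hq0 : ∀ i, 0 ≤ q i := by
    intro i
    have := hdiag i
    rw [Complex.le_def] at this
    simpa using this.1
  -- key trace computation
  have key : ∀ g : Fin d → ℝ,
      (((ρ * (U * Matrix.diagonal (Complex.ofReal ∘ g) * Uᴴ)).trace).re) = ∑ i, q i * g i := by
    intro g
    have h1 : (ρ * (U * Matrix.diagonal (Complex.ofReal ∘ g) * Uᴴ)).trace
        = (σ * Matrix.diagonal (Complex.ofReal ∘ g)).trace := by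
      rw [hσdef]
      rw [show ρ * (U * Matrix.diagonal (Complex.ofReal ∘ g) * Uᴴ)
          = (ρ * U * Matrix.diagonal (Complex.ofReal ∘ g)) * Uᴴ by
        simp only [← Matrix.mul_assoc]]
      rw [Matrix.trace_mul_comm]
      rw [show Uᴴ * (ρ * U * Matrix.diagonal (Complex.ofReal ∘ g))
          = (Uᴴ * ρ * U) * Matrix.diagonal (Complex.ofReal ∘ g) by
        simp only [← Matrix.mul_assoc]]
    rw [h1, trace_mul_diagonal']
    rw [Complex.re_sum]
    congr 1; ext i
    rw [hσre i]
    simp [← Complex.ofReal_mul]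
  -- trace of σ is 1
  have hqsum : ∑ i, q i = 1 := by
    have h2 : σ.trace = ρ.trace := by
      rw [hσdef, Matrix.trace_mul_cycle, ← Matrix.star_eq_conjTranspose,
        (Matrix.mem_unitaryGroup_iff).mp hH.eigenvectorUnitary.2]
      simp
    have : (σ.trace).re = 1 := by rw [h2, hρtr]; simp
    rw [← this, Matrix.trace, Complex.re_sum]
    rfl
  -- eigenvalues positive
  have hlampos : ∀ i, 0 < lam i := fun i => hμ.eigenvalues_pos i
  -- rewrite both traces
  have hμeq : μ = U * Matrix.diagonal (Complex.ofReal ∘ lam) * Uᴴ := by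
    conv_lhs => rw [hH.spectral_theorem]
    rw [Unitary.conjStarAlgAut_apply, Matrix.star_eq_conjTranspose]
    rfl
  have hcfc : cfc (Real.logb 2) μ = U * Matrix.diagonal (Complex.ofReal ∘ (Real.logb 2 ∘ lam)) * Uᴴ := by
    rw [hH.cfc_eq, Matrix.IsHermitian.cfc, Unitary.conjStarAlgAut_apply, Matrix.star_eq_conjTranspose]
    rfl
  have e1 : ((ρ * μ).trace).re = ∑ i, q i * lam i := by rw [hμeq]; exact key lam
  have e2 : ((ρ * cfc (Real.logb 2) μ).trace).re = ∑ i, q i * Real.logb 2 (lam i) := by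
    rw [hcfc]; exact key (Real.logb 2 ∘ lam)
  rw [e1, e2, neg_le_neg_iff]
  -- Jensen's inequality for logb
  have hconc : ConcaveOn ℝ (Set.Ioi (0:ℝ)) (Real.logb 2) := by
    have h := strictConcaveOn_log_Ioi.concaveOn
    have := h.smul (c := (Real.log 2)⁻¹) (by positivity)
    have hf : Real.logb 2 = fun x => (Real.log 2)⁻¹ • Real.log x := by
      funext x
      simp [Real.logb, div_eq_inv_mul]
    rw [hf]; exact this
  have := hconc.le_map_sum (t := Finset.univ) (w := q) (p := lam)
    (fun i _ => hq0 i) hqsum (fun i _ => hlampos i)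
  simpa using this
end
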